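/- Let m ≥ 2 be an integer and let v : ℝ^m ∖ {0} → ℝ^{m³} be the cubic Misawa–Nakauchi map with components v_{ijk}(x) = (1/√((m−1)(m+2)))( δ_{ij} x_k/r + δ_{jk} x_i/r + δ_{ik} x_j/r − (m+2) x_i x_j x_k / r³ ). Then v is a harmonic map into the sphere, i.e. for every x ∈ ℝ^m ∖ {0} it satisfies Δv(x) + |∇v(x)|² v(x) = 0 (componentwise), where |∇v|² = Σ_{a,i,j,k}(∂_a v_{ijk})². -/

import Mathlib

noncomputable section

open Real MeasureTheory

/-- Partial derivative of `f` in the `a`-th coordinate direction. -/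
def pd {m : ℕ} (a : Fin m) (f : EuclideanSpace ℝ (Fin m) → ℝ)
    (x : EuclideanSpace ℝ (Fin m)) : ℝ :=
  fderiv ℝ f x (EuclideanSpace.single a 1)

/-- Euclidean Laplacian `Δf = Σ_a ∂²f/∂x_a²`. -/
def lap {m : ℕ} (f : EuclideanSpace ℝ (Fin m) → ℝ)
    (x : EuclideanSpace ℝ (Fin m)) : ℝ :=
  ∑ a : Fin m, pd a (pd a f) x

/-- Squared norm of the total derivative: `|∇w|² = Σ_{k,a} (∂_k w_a)²`. -/
def gradSq {m : ℕ} {ι : Type*} [Fintype ι]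
    (w : ι → EuclideanSpace ℝ (Fin m) → ℝ) (x : EuclideanSpace ℝ (Fin m)) : ℝ :=
  ∑ k : Fin m, ∑ a : ι, (pd k (w a) x) ^ 2

/-- The cubic Misawa–Nakauchi map
`v_{ijk}(x) = (1/√((m−1)(m+2)))(δ_{ij}x_k/r + δ_{jk}x_i/r + δ_{ik}x_j/r − (m+2)xᵢxⱼx_k/r³)`. -/
def vMN (m : ℕ) (i j k : Fin m) (x : EuclideanSpace ℝ (Fin m)) : ℝ :=
  (1 / Real.sqrt (((m : ℝ) - 1) * ((m : ℝ) + 2))) *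
    ((if i = j then (1 : ℝ) else 0) * x k / ‖x‖
      + (if j = k then (1 : ℝ) else 0) * x i / ‖x‖
      + (if i = k then (1 : ℝ) else 0) * x j / ‖x‖
      - ((m : ℝ) + 2) * x i * x j * x k / ‖x‖ ^ 3)

set_option maxHeartbeats 1000000

variable {m : ℕ}

lemma hasFDerivAt_mynorm {x : EuclideanSpace ℝ (Fin m)} (hx : x ≠ 0) :
    HasFDerivAt (fun y : EuclideanSpace ℝ (Fin m) => ‖y‖) ((‖x‖⁻¹) • innerSL ℝ x) x := by
  have hr : (0:ℝ) < ‖x‖ := norm_pos_iff.2 hx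
  have h2 : HasFDerivAt (fun y : EuclideanSpace ℝ (Fin m) => ‖y‖ ^ 2)
      ((2:ℕ) • innerSL ℝ x) x := (hasStrictFDerivAt_norm_sq x).hasFDerivAt
  have hs := h2.sqrt (by positivity)
  have he : (fun y : EuclideanSpace ℝ (Fin m) => Real.sqrt (‖y‖^2)) = fun y => ‖y‖ := by
    funext y; exact Real.sqrt_sq (norm_nonneg y)
  rw [he] at hs
  refine hs.congr_fderiv (Eq.symm ?_)
  rw [Real.sqrt_sq (norm_nonneg x)]
  ext y
  simp [smul_smul]
  ring

lemma hasFDerivAt_invpow (n : ℕ) {x : EuclideanSpace ℝ (Fin m)} (hx : x ≠ 0) :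
    HasFDerivAt (fun y : EuclideanSpace ℝ (Fin m) => (‖y‖ ^ n)⁻¹)
      ((-(n:ℝ) * (‖x‖ ^ (n+2))⁻¹) • innerSL ℝ x) x := by
  have hr : (0:ℝ) < ‖x‖ := norm_pos_iff.2 hx
  have h1 : HasDerivAt (fun t : ℝ => (t ^ n)⁻¹)
      (-(↑n * ‖x‖ ^ (n-1)) / (‖x‖ ^ n) ^ 2) ‖x‖ :=
    (hasDerivAt_pow n ‖x‖).inv (pow_ne_zero _ hr.ne')
  have h := h1.comp_hasFDerivAt x (hasFDerivAt_mynorm hx)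
  refine h.congr_fderiv (Eq.symm ?_)
  ext y
  simp [smul_smul]
  have hs : -(n:ℝ) * (‖x‖ ^ (n+2))⁻¹ = -(↑n * ‖x‖ ^ (n - 1)) / (‖x‖ ^ n) ^ 2 * ‖x‖⁻¹ := by
    rcases n with _ | k
    · simp
    · have : (k+1) - 1 = k := rfl
      rw [this]
      field_simp
      ring
  rw [← hs, neg_mul, neg_mul, mul_assoc]

variable {x : EuclideanSpace ℝ (Fin m)}

lemma diffAt_inv (n : ℕ) (hx : x ≠ 0) :
    DifferentiableAt ℝ (fun y : EuclideanSpace ℝ (Fin m) => (‖y‖ ^ n)⁻¹) x :=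
  (hasFDerivAt_invpow n hx).differentiableAt

lemma diffAt_coord (i : Fin m) :
    DifferentiableAt ℝ (fun y : EuclideanSpace ℝ (Fin m) => y i) x :=
  (EuclideanSpace.proj (𝕜 := ℝ) i).differentiableAt

lemma pd_coord (a i : Fin m) :
    pd a (fun y : EuclideanSpace ℝ (Fin m) => y i) x = if a = i then 1 else 0 := by
  unfold pd
  have h : (fun y : EuclideanSpace ℝ (Fin m) => y i) = ⇑(EuclideanSpace.proj (𝕜 := ℝ) i) := rfl
  rw [h, (EuclideanSpace.proj (𝕜 := ℝ) i).fderiv]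
  simp [EuclideanSpace.single_apply, eq_comm]

lemma pd_inv (n : ℕ) (hx : x ≠ 0) (a : Fin m) :
    pd a (fun y : EuclideanSpace ℝ (Fin m) => (‖y‖ ^ n)⁻¹) x
      = -(n:ℝ) * x a * (‖x‖ ^ (n+2))⁻¹ := by
  unfold pd
  rw [(hasFDerivAt_invpow n hx).fderiv]
  simp [EuclideanSpace.inner_single_right, real_inner_comm]
  ring

lemma pd_add {f g : EuclideanSpace ℝ (Fin m) → ℝ} (hf : DifferentiableAt ℝ f x)
    (hg : DifferentiableAt ℝ g x) (a : Fin m) :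
    pd a (fun y => f y + g y) x = pd a f x + pd a g x := by
  unfold pd; rw [fderiv_fun_add hf hg]; simp

lemma pd_sub {f g : EuclideanSpace ℝ (Fin m) → ℝ} (hf : DifferentiableAt ℝ f x)
    (hg : DifferentiableAt ℝ g x) (a : Fin m) :
    pd a (fun y => f y - g y) x = pd a f x - pd a g x := by
  unfold pd; rw [fderiv_fun_sub hf hg]; simp

lemma pd_const_mul {f : EuclideanSpace ℝ (Fin m) → ℝ} (hf : DifferentiableAt ℝ f x)
    (c : ℝ) (a : Fin m) :
    pd a (fun y => c * f y) x = c * pd a f x := by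
  unfold pd; rw [fderiv_const_mul hf]; simp

lemma pd_mul {f g : EuclideanSpace ℝ (Fin m) → ℝ} (hf : DifferentiableAt ℝ f x)
    (hg : DifferentiableAt ℝ g x) (a : Fin m) :
    pd a (fun y => f y * g y) x = pd a f x * g x + f x * pd a g x := by
  unfold pd; rw [fderiv_fun_mul hf hg]; simp; ring

lemma pd_coord_mul {f : EuclideanSpace ℝ (Fin m) → ℝ} (hf : DifferentiableAt ℝ f x)
    (a i : Fin m) :
    pd a (fun y => y i * f y) x = (if a = i then 1 else 0) * f x + x i * pd a f x := by
  rw [pd_mul (diffAt_coord i) hf, pd_coord]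

lemma pd_congr {f g : EuclideanSpace ℝ (Fin m) → ℝ} (h : f =ᶠ[nhds x] g) (a : Fin m) :
    pd a f x = pd a g x := by
  unfold pd; rw [h.fderiv_eq]

lemma diff_P1 (i : Fin m) (n : ℕ) (hx : x ≠ 0) :
    DifferentiableAt ℝ (fun y : EuclideanSpace ℝ (Fin m) => y i * (‖y‖ ^ n)⁻¹) x :=
  (diffAt_coord i).mul (diffAt_inv n hx)

lemma diff_P2 (i j : Fin m) (n : ℕ) (hx : x ≠ 0) :
    DifferentiableAt ℝ (fun y : EuclideanSpace ℝ (Fin m) => y i * (y j * (‖y‖ ^ n)⁻¹)) x :=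
  (diffAt_coord i).mul (diff_P1 j n hx)

lemma diff_P3 (i j k : Fin m) (n : ℕ) (hx : x ≠ 0) :
    DifferentiableAt ℝ
      (fun y : EuclideanSpace ℝ (Fin m) => y i * (y j * (y k * (‖y‖ ^ n)⁻¹))) x :=
  (diffAt_coord i).mul (diff_P2 j k n hx)

lemma diff_P4 (i j k l : Fin m) (n : ℕ) (hx : x ≠ 0) :
    DifferentiableAt ℝ
      (fun y : EuclideanSpace ℝ (Fin m) => y i * (y j * (y k * (y l * (‖y‖ ^ n)⁻¹)))) x :=
  (diffAt_coord i).mul (diff_P3 j k l n hx)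

lemma pd_P1 (a i : Fin m) (n : ℕ) (hx : x ≠ 0) :
    pd a (fun y : EuclideanSpace ℝ (Fin m) => y i * (‖y‖ ^ n)⁻¹) x
      = (if a = i then 1 else 0) * (‖x‖ ^ n)⁻¹
        - (n:ℝ) * (x i * x a) * (‖x‖ ^ (n+2))⁻¹ := by
  rw [pd_coord_mul (diffAt_inv n hx), pd_inv n hx]; ring

lemma pd_P2 (a i j : Fin m) (n : ℕ) (hx : x ≠ 0) :
    pd a (fun y : EuclideanSpace ℝ (Fin m) => y i * (y j * (‖y‖ ^ n)⁻¹)) x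
      = ((if a = i then 1 else 0) * x j + (if a = j then 1 else 0) * x i) * (‖x‖ ^ n)⁻¹
        - (n:ℝ) * (x i * x j * x a) * (‖x‖ ^ (n+2))⁻¹ := by
  rw [pd_coord_mul (diff_P1 j n hx), pd_P1 a j n hx]; ring

lemma pd_P3 (a i j k : Fin m) (n : ℕ) (hx : x ≠ 0) :
    pd a (fun y : EuclideanSpace ℝ (Fin m) => y i * (y j * (y k * (‖y‖ ^ n)⁻¹))) x
      = ((if a = i then 1 else 0) * (x j * x k) + (if a = j then 1 else 0) * (x i * x k)
          + (if a = k then 1 else 0) * (x i * x j)) * (‖x‖ ^ n)⁻¹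
        - (n:ℝ) * (x i * x j * x k * x a) * (‖x‖ ^ (n+2))⁻¹ := by
  rw [pd_coord_mul (diff_P2 j k n hx), pd_P2 a j k n hx]; ring

lemma pd_P4 (a i j k l : Fin m) (n : ℕ) (hx : x ≠ 0) :
    pd a (fun y : EuclideanSpace ℝ (Fin m) => y i * (y j * (y k * (y l * (‖y‖ ^ n)⁻¹)))) x
      = ((if a = i then 1 else 0) * (x j * x k * x l)
          + (if a = j then 1 else 0) * (x i * x k * x l)
          + (if a = k then 1 else 0) * (x i * x j * x l)
          + (if a = l then 1 else 0) * (x i * x j * x k)) * (‖x‖ ^ n)⁻¹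
        - (n:ℝ) * (x i * x j * x k * x l * x a) * (‖x‖ ^ (n+2))⁻¹ := by
  rw [pd_coord_mul (diff_P3 j k l n hx), pd_P3 a j k l n hx]; ring

def cMN (m : ℕ) : ℝ := 1 / Real.sqrt (((m : ℝ) - 1) * ((m : ℝ) + 2))

lemma vMN_eq (m : ℕ) (i j k : Fin m) :
    vMN m i j k = fun y =>
      cMN m * ((if i = j then (1:ℝ) else 0) * (y k * (‖y‖ ^ 1)⁻¹)
        + (if j = k then (1:ℝ) else 0) * (y i * (‖y‖ ^ 1)⁻¹)
        + (if i = k then (1:ℝ) else 0) * (y j * (‖y‖ ^ 1)⁻¹)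
        - ((m:ℝ) + 2) * (y i * (y j * (y k * (‖y‖ ^ 3)⁻¹)))) := by
  funext y
  unfold vMN cMN
  ring

lemma diff_vMN (hx : x ≠ 0) (i j k : Fin m) :
    DifferentiableAt ℝ (vMN m i j k) x := by
  rw [vMN_eq]
  exact ((((diff_P1 k 1 hx).const_mul _).add ((diff_P1 i 1 hx).const_mul _)).add
    ((diff_P1 j 1 hx).const_mul _)).sub ((diff_P3 i j k 3 hx).const_mul _) |>.const_mul _

def Dv (m : ℕ) (a p q s : Fin m) (x : EuclideanSpace ℝ (Fin m)) : ℝ :=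
  cMN m * (((if p = q then (1:ℝ) else 0) * (if a = s then (1:ℝ) else 0)
      + (if q = s then (1:ℝ) else 0) * (if a = p then (1:ℝ) else 0)
      + (if p = s then (1:ℝ) else 0) * (if a = q then (1:ℝ) else 0)) * (‖x‖ ^ 1)⁻¹
    - ((if p = q then (1:ℝ) else 0) * (x s * (x a * (‖x‖ ^ 3)⁻¹))
      + (if q = s then (1:ℝ) else 0) * (x p * (x a * (‖x‖ ^ 3)⁻¹))
      + (if p = s then (1:ℝ) else 0) * (x q * (x a * (‖x‖ ^ 3)⁻¹)))
    - ((m:ℝ) + 2) * ((if a = p then (1:ℝ) else 0) * (x q * (x s * (‖x‖ ^ 3)⁻¹))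
      + (if a = q then (1:ℝ) else 0) * (x p * (x s * (‖x‖ ^ 3)⁻¹))
      + (if a = s then (1:ℝ) else 0) * (x p * (x q * (‖x‖ ^ 3)⁻¹)))
    + 3 * ((m:ℝ) + 2) * (x p * (x q * (x s * (x a * (‖x‖ ^ 5)⁻¹)))))

lemma pd_vMN (hx : x ≠ 0) (a p q s : Fin m) :
    pd a (vMN m p q s) x = Dv m a p q s x := by
  rw [vMN_eq]
  rw [pd_const_mul (((((diff_P1 s 1 hx).const_mul _).fun_add ((diff_P1 p 1 hx).const_mul _)).fun_add
    ((diff_P1 q 1 hx).const_mul _)).fun_sub ((diff_P3 p q s 3 hx).const_mul _))]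
  rw [pd_sub (((((diff_P1 s 1 hx).const_mul _)).fun_add ((diff_P1 p 1 hx).const_mul _)).fun_add
      ((diff_P1 q 1 hx).const_mul _)) ((diff_P3 p q s 3 hx).const_mul _)]
  rw [pd_add ((((diff_P1 s 1 hx).const_mul _)).fun_add ((diff_P1 p 1 hx).const_mul _))
      ((diff_P1 q 1 hx).const_mul _)]
  rw [pd_add ((diff_P1 s 1 hx).const_mul _) ((diff_P1 p 1 hx).const_mul _)]
  rw [pd_const_mul (diff_P1 s 1 hx), pd_const_mul (diff_P1 p 1 hx),
    pd_const_mul (diff_P1 q 1 hx), pd_const_mul (diff_P3 p q s 3 hx)]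
  rw [pd_P1 a s 1 hx, pd_P1 a p 1 hx, pd_P1 a q 1 hx, pd_P3 a p q s 3 hx]
  unfold Dv
  push_cast
  ring

lemma sum_sq_norm : ∑ a : Fin m, x a * x a = ‖x‖ ^ 2 := by
  rw [EuclideanSpace.norm_eq, Real.sq_sqrt (by positivity)]
  refine Finset.sum_congr rfl fun a _ => ?_
  rw [Real.norm_eq_abs, sq_abs, sq]

lemma sumB (i : Fin m) (f : Fin m → ℝ) :
    ∑ a : Fin m, (if a = i then (1:ℝ) else 0) * f a = f i := by
  simp [ite_mul]

lemma sumB' (i : Fin m) (f : Fin m → ℝ) :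
    ∑ a : Fin m, (if i = a then (1:ℝ) else 0) * f a = f i := by
  simp [ite_mul]

lemma sumC (i j : Fin m) (f : Fin m → ℝ) :
    ∑ a : Fin m, (if a = i then (1:ℝ) else 0) * ((if a = j then (1:ℝ) else 0) * f a)
      = (if i = j then (1:ℝ) else 0) * f i := by
  simp only [ite_mul, one_mul, zero_mul, Finset.sum_ite_eq', Finset.mem_univ, if_true]

lemma sumD (c : ℝ) : ∑ a : Fin m, x a * x a * c = ‖x‖ ^ 2 * c := by
  rw [← Finset.sum_mul, sum_sq_norm]

lemma sumE (c : ℝ) : ∑ _a : Fin m, c = (m : ℝ) * c := by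
  simp [Finset.sum_const, Finset.card_univ, nsmul_eq_mul]

lemma lap_vMN (hx : x ≠ 0) (i j k : Fin m) :
    lap (vMN m i j k) x = -(3*((m:ℝ)+1)) * (‖x‖^2)⁻¹ * vMN m i j k x := by
  have hr : ‖x‖ ≠ 0 := norm_ne_zero_iff.2 hx
  have hev : ∀ a : Fin m, pd a (pd a (vMN m i j k)) x = pd a (Dv m a i j k) x := by
    intro a
    refine pd_congr ?_ a
    filter_upwards [eventually_ne_nhds hx] with y hy
    exact pd_vMN hy a i j k
  have hdec : ∀ a : Fin m, pd a (Dv m a i j k) x =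
        (if a = k then (1:ℝ) else 0) * (-(cMN m) * (if i = j then (1:ℝ) else 0) * x a * (‖x‖ ^ 3)⁻¹)
        + (if a = i then (1:ℝ) else 0) * (-(cMN m) * (if j = k then (1:ℝ) else 0) * x a * (‖x‖ ^ 3)⁻¹)
        + (if a = j then (1:ℝ) else 0) * (-(cMN m) * (if i = k then (1:ℝ) else 0) * x a * (‖x‖ ^ 3)⁻¹)
        + (if a = k then (1:ℝ) else 0) * (-(cMN m) * (if i = j then (1:ℝ) else 0) * x a * (‖x‖ ^ 3)⁻¹)
        + (-(cMN m) * (if i = j then (1:ℝ) else 0) * x k * (‖x‖ ^ 3)⁻¹)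
        + x a * x a * (3 * cMN m * (if i = j then (1:ℝ) else 0) * x k * (‖x‖ ^ 5)⁻¹)
        + (if a = i then (1:ℝ) else 0) * (-(cMN m) * (if j = k then (1:ℝ) else 0) * x a * (‖x‖ ^ 3)⁻¹)
        + (-(cMN m) * (if j = k then (1:ℝ) else 0) * x i * (‖x‖ ^ 3)⁻¹)
        + x a * x a * (3 * cMN m * (if j = k then (1:ℝ) else 0) * x i * (‖x‖ ^ 5)⁻¹)
        + (if a = j then (1:ℝ) else 0) * (-(cMN m) * (if i = k then (1:ℝ) else 0) * x a * (‖x‖ ^ 3)⁻¹)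
        + (-(cMN m) * (if i = k then (1:ℝ) else 0) * x j * (‖x‖ ^ 3)⁻¹)
        + x a * x a * (3 * cMN m * (if i = k then (1:ℝ) else 0) * x j * (‖x‖ ^ 5)⁻¹)
        + (if a = i then (1:ℝ) else 0) * ((if a = j then (1:ℝ) else 0) * (-(cMN m) * ((m:ℝ)+2) * x k * (‖x‖ ^ 3)⁻¹))
        + (if a = i then (1:ℝ) else 0) * ((if a = j then (1:ℝ) else 0) * (-(cMN m) * ((m:ℝ)+2) * x k * (‖x‖ ^ 3)⁻¹))
        + (if a = i then (1:ℝ) else 0) * ((if a = k then (1:ℝ) else 0) * (-(cMN m) * ((m:ℝ)+2) * x j * (‖x‖ ^ 3)⁻¹))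
        + (if a = i then (1:ℝ) else 0) * ((if a = k then (1:ℝ) else 0) * (-(cMN m) * ((m:ℝ)+2) * x j * (‖x‖ ^ 3)⁻¹))
        + (if a = j then (1:ℝ) else 0) * ((if a = k then (1:ℝ) else 0) * (-(cMN m) * ((m:ℝ)+2) * x i * (‖x‖ ^ 3)⁻¹))
        + (if a = j then (1:ℝ) else 0) * ((if a = k then (1:ℝ) else 0) * (-(cMN m) * ((m:ℝ)+2) * x i * (‖x‖ ^ 3)⁻¹))
        + (if a = i then (1:ℝ) else 0) * (3 * cMN m * ((m:ℝ)+2) * x j * x k * x a * (‖x‖ ^ 5)⁻¹)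
        + (if a = i then (1:ℝ) else 0) * (3 * cMN m * ((m:ℝ)+2) * x j * x k * x a * (‖x‖ ^ 5)⁻¹)
        + (if a = j then (1:ℝ) else 0) * (3 * cMN m * ((m:ℝ)+2) * x i * x k * x a * (‖x‖ ^ 5)⁻¹)
        + (if a = j then (1:ℝ) else 0) * (3 * cMN m * ((m:ℝ)+2) * x i * x k * x a * (‖x‖ ^ 5)⁻¹)
        + (if a = k then (1:ℝ) else 0) * (3 * cMN m * ((m:ℝ)+2) * x i * x j * x a * (‖x‖ ^ 5)⁻¹)
        + (if a = k then (1:ℝ) else 0) * (3 * cMN m * ((m:ℝ)+2) * x i * x j * x a * (‖x‖ ^ 5)⁻¹)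
        + (3 * cMN m * ((m:ℝ)+2) * x i * x j * x k * (‖x‖ ^ 5)⁻¹)
        + x a * x a * (-(15) * cMN m * ((m:ℝ)+2) * x i * x j * x k * (‖x‖ ^ 7)⁻¹) := by
    intro a
    unfold Dv
    have d1 : DifferentiableAt ℝ (fun y : EuclideanSpace ℝ (Fin m) =>
        ((if i = j then (1:ℝ) else 0) * (if a = k then (1:ℝ) else 0)
          + (if j = k then (1:ℝ) else 0) * (if a = i then (1:ℝ) else 0)
          + (if i = k then (1:ℝ) else 0) * (if a = j then (1:ℝ) else 0)) * (‖y‖ ^ 1)⁻¹) x :=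
      (diffAt_inv 1 hx).const_mul _
    have d2 := (((diff_P2 k a 3 hx).const_mul ((if i = j then (1:ℝ) else 0))).fun_add
        ((diff_P2 i a 3 hx).const_mul ((if j = k then (1:ℝ) else 0)))).fun_add
        ((diff_P2 j a 3 hx).const_mul ((if i = k then (1:ℝ) else 0)))
    have d3i := (((diff_P2 j k 3 hx).const_mul ((if a = i then (1:ℝ) else 0))).fun_add
        ((diff_P2 i k 3 hx).const_mul ((if a = j then (1:ℝ) else 0)))).fun_add
        ((diff_P2 i j 3 hx).const_mul ((if a = k then (1:ℝ) else 0)))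
    have d3 := d3i.const_mul ((m:ℝ)+2)
    have d4 := (diff_P4 i j k a 5 hx).const_mul (3 * ((m:ℝ)+2))
    rw [pd_const_mul (((d1.fun_sub d2).fun_sub d3).fun_add d4),
        pd_add ((d1.fun_sub d2).fun_sub d3) d4, pd_sub (d1.fun_sub d2) d3, pd_sub d1 d2,
        pd_const_mul (diffAt_inv 1 hx), pd_inv 1 hx,
        pd_add ((diff_P2 k a 3 hx).const_mul _ |>.fun_add ((diff_P2 i a 3 hx).const_mul _))
          ((diff_P2 j a 3 hx).const_mul _),
        pd_add ((diff_P2 k a 3 hx).const_mul _) ((diff_P2 i a 3 hx).const_mul _),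
        pd_const_mul (diff_P2 k a 3 hx), pd_const_mul (diff_P2 i a 3 hx),
        pd_const_mul (diff_P2 j a 3 hx),
        pd_P2 a k a 3 hx, pd_P2 a i a 3 hx, pd_P2 a j a 3 hx,
        pd_const_mul d3i,
        pd_add ((diff_P2 j k 3 hx).const_mul _ |>.fun_add ((diff_P2 i k 3 hx).const_mul _))
          ((diff_P2 i j 3 hx).const_mul _),
        pd_add ((diff_P2 j k 3 hx).const_mul _) ((diff_P2 i k 3 hx).const_mul _),
        pd_const_mul (diff_P2 j k 3 hx), pd_const_mul (diff_P2 i k 3 hx),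
        pd_const_mul (diff_P2 i j 3 hx),
        pd_P2 a j k 3 hx, pd_P2 a i k 3 hx, pd_P2 a i j 3 hx,
        pd_const_mul (diff_P4 i j k a 5 hx), pd_P4 a i j k a 5 hx]
    simp only [eq_self_iff_true, if_true]
    ring
  unfold lap
  rw [Finset.sum_congr rfl (fun a _ => (hev a).trans (hdec a))]
  simp only [Finset.sum_add_distrib, sumB, sumC, sumD, sumE]
  rw [show vMN m i j k x = cMN m * ((if i = j then (1:ℝ) else 0) * (x k * (‖x‖ ^ 1)⁻¹)
        + (if j = k then (1:ℝ) else 0) * (x i * (‖x‖ ^ 1)⁻¹)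
        + (if i = k then (1:ℝ) else 0) * (x j * (‖x‖ ^ 1)⁻¹)
        - ((m:ℝ) + 2) * (x i * (x j * (x k * (‖x‖ ^ 3)⁻¹)))) from congrFun (vMN_eq m i j k) x]
  set dij := (if i = j then (1:ℝ) else 0)
  set djk := (if j = k then (1:ℝ) else 0)
  set dik := (if i = k then (1:ℝ) else 0)
  field_simp
  ring

lemma sumBr (b : Fin m) (f : Fin m → ℝ) :
    ∑ a : Fin m, (if b = a then (1:ℝ) else 0) * f a = f b := by
  simp [ite_mul]

lemma sumCrr (b c : Fin m) (f : Fin m → ℝ) :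
    ∑ a : Fin m, (if b = a then (1:ℝ) else 0) * ((if c = a then (1:ℝ) else 0) * f a)
      = (if c = b then (1:ℝ) else 0) * f b := by
  simp only [ite_mul, one_mul, zero_mul, Finset.sum_ite_eq, Finset.mem_univ, if_true]

lemma pd_const (c : ℝ) (a : Fin m) :
    pd a (fun _ : EuclideanSpace ℝ (Fin m) => c) x = 0 := by
  unfold pd; rw [fderiv_fun_const]; simp

lemma pd_sum {ι : Type*} (t : Finset ι) (f : ι → EuclideanSpace ℝ (Fin m) → ℝ)
    (hf : ∀ i ∈ t, DifferentiableAt ℝ (f i) x) (a : Fin m) :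
    pd a (fun y => ∑ i ∈ t, f i y) x = ∑ i ∈ t, pd a (f i) x := by
  unfold pd; rw [fderiv_fun_sum hf]; simp

lemma diff_Dv (hx : x ≠ 0) (a p q s : Fin m) :
    DifferentiableAt ℝ (Dv m a p q s) x := by
  have d1 : DifferentiableAt ℝ (fun y : EuclideanSpace ℝ (Fin m) =>
      ((if p = q then (1:ℝ) else 0) * (if a = s then (1:ℝ) else 0)
        + (if q = s then (1:ℝ) else 0) * (if a = p then (1:ℝ) else 0)
        + (if p = s then (1:ℝ) else 0) * (if a = q then (1:ℝ) else 0)) * (‖y‖ ^ 1)⁻¹) x :=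
    (diffAt_inv 1 hx).const_mul _
  have d2 := (((diff_P2 s a 3 hx).const_mul ((if p = q then (1:ℝ) else 0))).add
      ((diff_P2 p a 3 hx).const_mul ((if q = s then (1:ℝ) else 0)))).add
      ((diff_P2 q a 3 hx).const_mul ((if p = s then (1:ℝ) else 0)))
  have d3 := ((((diff_P2 q s 3 hx).const_mul ((if a = p then (1:ℝ) else 0))).add
      ((diff_P2 p s 3 hx).const_mul ((if a = q then (1:ℝ) else 0)))).add
      ((diff_P2 p q 3 hx).const_mul ((if a = s then (1:ℝ) else 0)))).const_mul ((m:ℝ)+2)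
  have d4 := (diff_P4 p q s a 5 hx).const_mul (3 * ((m:ℝ)+2))
  exact ((((d1.sub d2).sub d3).add d4).const_mul (cMN m))

lemma lapDv (hx : x ≠ 0) (p q s : Fin m) :
    lap (vMN m p q s) x = ∑ a : Fin m, pd a (Dv m a p q s) x := by
  unfold lap
  refine Finset.sum_congr rfl fun a _ => ?_
  refine pd_congr ?_ a
  filter_upwards [eventually_ne_nhds hx] with y hy
  exact pd_vMN hy a p q s

lemma sq_vMN_sum (hm : 2 ≤ m) (hx : x ≠ 0) :
    ∑ p : Fin m, ∑ q : Fin m, ∑ s : Fin m, (vMN m p q s x)^2 = 1 := by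
  have hr : ‖x‖ ≠ 0 := norm_ne_zero_iff.2 hx
  have hpos : (0:ℝ) < ((m:ℝ)-1) * ((m:ℝ)+2) := by
    have h2 : (2:ℝ) ≤ (m:ℝ) := by exact_mod_cast hm
    nlinarith
  have hc : cMN m * cMN m * (((m:ℝ)-1) * ((m:ℝ)+2)) = 1 := by
    unfold cMN
    rw [div_mul_div_comm, one_mul, Real.mul_self_sqrt hpos.le, one_div,
      inv_mul_cancel₀ hpos.ne']
  have hs : ∀ p q s : Fin m, (vMN m p q s x)^2 =
        x s * x s * ((cMN m * cMN m) * (if p = q then (1:ℝ) else 0) * (if p = q then (1:ℝ) else 0) * (‖x‖ ^ 1)⁻¹ * (‖x‖ ^ 1)⁻¹)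
        + (if q = s then (1:ℝ) else 0) * ((if q = s then (1:ℝ) else 0) * ((cMN m * cMN m) * x p * x p * (‖x‖ ^ 1)⁻¹ * (‖x‖ ^ 1)⁻¹))
        + (if p = s then (1:ℝ) else 0) * ((if p = s then (1:ℝ) else 0) * ((cMN m * cMN m) * x q * x q * (‖x‖ ^ 1)⁻¹ * (‖x‖ ^ 1)⁻¹))
        + x s * x s * ((cMN m * cMN m) * ((m:ℝ)+2) * ((m:ℝ)+2) * x p * x p * x q * x q * (‖x‖ ^ 3)⁻¹ * (‖x‖ ^ 3)⁻¹)
        + (if q = s then (1:ℝ) else 0) * (2 * (cMN m * cMN m) * (if p = q then (1:ℝ) else 0) * x s * x p * (‖x‖ ^ 1)⁻¹ * (‖x‖ ^ 1)⁻¹)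
        + (if p = s then (1:ℝ) else 0) * (2 * (cMN m * cMN m) * (if p = q then (1:ℝ) else 0) * x s * x q * (‖x‖ ^ 1)⁻¹ * (‖x‖ ^ 1)⁻¹)
        + (if q = s then (1:ℝ) else 0) * ((if p = s then (1:ℝ) else 0) * (2 * (cMN m * cMN m) * x p * x q * (‖x‖ ^ 1)⁻¹ * (‖x‖ ^ 1)⁻¹))
        + x s * x s * (-2 * (cMN m * cMN m) * ((m:ℝ)+2) * (if p = q then (1:ℝ) else 0) * x p * x q * (‖x‖ ^ 1)⁻¹ * (‖x‖ ^ 3)⁻¹)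
        + (if q = s then (1:ℝ) else 0) * (-2 * (cMN m * cMN m) * ((m:ℝ)+2) * x p * x p * x q * x s * (‖x‖ ^ 1)⁻¹ * (‖x‖ ^ 3)⁻¹)
        + (if p = s then (1:ℝ) else 0) * (-2 * (cMN m * cMN m) * ((m:ℝ)+2) * x q * x q * x p * x s * (‖x‖ ^ 1)⁻¹ * (‖x‖ ^ 3)⁻¹) := by
    intro p q s
    rw [show vMN m p q s x = cMN m * ((if p = q then (1:ℝ) else 0) * (x s * (‖x‖ ^ 1)⁻¹)
        + (if q = s then (1:ℝ) else 0) * (x p * (‖x‖ ^ 1)⁻¹)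
        + (if p = s then (1:ℝ) else 0) * (x q * (‖x‖ ^ 1)⁻¹)
        - ((m:ℝ) + 2) * (x p * (x q * (x s * (‖x‖ ^ 3)⁻¹)))) from congrFun (vMN_eq m p q s) x]
    ring
  have h1 : ∀ p q : Fin m, ∑ s : Fin m, (vMN m p q s x)^2 =
        (if p = q then (1:ℝ) else 0) * ((if p = q then (1:ℝ) else 0) * ((cMN m * cMN m) * ‖x‖ ^ 2 * (‖x‖ ^ 1)⁻¹ * (‖x‖ ^ 1)⁻¹))
        + ((cMN m * cMN m) * x p * x p * (‖x‖ ^ 1)⁻¹ * (‖x‖ ^ 1)⁻¹)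
        + x q * x q * ((cMN m * cMN m) * (‖x‖ ^ 1)⁻¹ * (‖x‖ ^ 1)⁻¹)
        + x q * x q * ((cMN m * cMN m) * ((m:ℝ)+2) * ((m:ℝ)+2) * x p * x p * ‖x‖ ^ 2 * (‖x‖ ^ 3)⁻¹ * (‖x‖ ^ 3)⁻¹)
        + (if p = q then (1:ℝ) else 0) * (2 * (cMN m * cMN m) * x q * x p * (‖x‖ ^ 1)⁻¹ * (‖x‖ ^ 1)⁻¹)
        + (if p = q then (1:ℝ) else 0) * (2 * (cMN m * cMN m) * x p * x q * (‖x‖ ^ 1)⁻¹ * (‖x‖ ^ 1)⁻¹)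
        + (if p = q then (1:ℝ) else 0) * (2 * (cMN m * cMN m) * x p * x q * (‖x‖ ^ 1)⁻¹ * (‖x‖ ^ 1)⁻¹)
        + (if p = q then (1:ℝ) else 0) * (-2 * (cMN m * cMN m) * ((m:ℝ)+2) * ‖x‖ ^ 2 * x p * x q * (‖x‖ ^ 1)⁻¹ * (‖x‖ ^ 3)⁻¹)
        + x q * x q * (-2 * (cMN m * cMN m) * ((m:ℝ)+2) * x p * x p * (‖x‖ ^ 1)⁻¹ * (‖x‖ ^ 3)⁻¹)
        + x q * x q * (-2 * (cMN m * cMN m) * ((m:ℝ)+2) * x p * x p * (‖x‖ ^ 1)⁻¹ * (‖x‖ ^ 3)⁻¹) := by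
    intro p q
    rw [Finset.sum_congr rfl fun s _ => hs p q s]
    simp only [Finset.sum_add_distrib, sumBr, sumCrr, sumD, sumE, eq_self_iff_true, if_true]
    ring
  have h2 : ∀ p : Fin m, ∑ q : Fin m, ∑ s : Fin m, (vMN m p q s x)^2 =
        ((cMN m * cMN m) * ‖x‖ ^ 2 * (‖x‖ ^ 1)⁻¹ * (‖x‖ ^ 1)⁻¹)
        + x p * x p * ((m:ℝ) * (cMN m * cMN m) * (‖x‖ ^ 1)⁻¹ * (‖x‖ ^ 1)⁻¹)
        + ((cMN m * cMN m) * ‖x‖ ^ 2 * (‖x‖ ^ 1)⁻¹ * (‖x‖ ^ 1)⁻¹)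
        + x p * x p * ((cMN m * cMN m) * ((m:ℝ)+2) * ((m:ℝ)+2) * ‖x‖ ^ 2 * ‖x‖ ^ 2 * (‖x‖ ^ 3)⁻¹ * (‖x‖ ^ 3)⁻¹)
        + x p * x p * (2 * (cMN m * cMN m) * (‖x‖ ^ 1)⁻¹ * (‖x‖ ^ 1)⁻¹)
        + x p * x p * (2 * (cMN m * cMN m) * (‖x‖ ^ 1)⁻¹ * (‖x‖ ^ 1)⁻¹)
        + x p * x p * (2 * (cMN m * cMN m) * (‖x‖ ^ 1)⁻¹ * (‖x‖ ^ 1)⁻¹)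
        + x p * x p * (-2 * (cMN m * cMN m) * ((m:ℝ)+2) * ‖x‖ ^ 2 * (‖x‖ ^ 1)⁻¹ * (‖x‖ ^ 3)⁻¹)
        + x p * x p * (-2 * (cMN m * cMN m) * ((m:ℝ)+2) * ‖x‖ ^ 2 * (‖x‖ ^ 1)⁻¹ * (‖x‖ ^ 3)⁻¹)
        + x p * x p * (-2 * (cMN m * cMN m) * ((m:ℝ)+2) * ‖x‖ ^ 2 * (‖x‖ ^ 1)⁻¹ * (‖x‖ ^ 3)⁻¹) := by
    intro p
    rw [Finset.sum_congr rfl fun q _ => h1 p q]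
    simp only [Finset.sum_add_distrib, sumBr, sumCrr, sumD, sumE, eq_self_iff_true, if_true]
    ring
  rw [Finset.sum_congr rfl fun p _ => h2 p]
  simp only [Finset.sum_add_distrib, sumD, sumE]
  rw [← hc]
  field_simp
  ring

lemma sum_swap4 {g : Fin m → Fin m → Fin m → Fin m → ℝ} :
    ∑ a : Fin m, ∑ p : Fin m, ∑ q : Fin m, ∑ s : Fin m, g a p q s
      = ∑ p : Fin m, ∑ q : Fin m, ∑ s : Fin m, ∑ a : Fin m, g a p q s := by
  rw [Finset.sum_comm]
  refine Finset.sum_congr rfl fun p _ => ?_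
  rw [Finset.sum_comm]
  refine Finset.sum_congr rfl fun q _ => ?_
  rw [Finset.sum_comm]

lemma gradSq_vMN (hm : 2 ≤ m) (hx : x ≠ 0) :
    ∑ a : Fin m, ∑ p : Fin m, ∑ q : Fin m, ∑ s : Fin m, (pd a (vMN m p q s) x)^2
      = 3*((m:ℝ)+1) * (‖x‖^2)⁻¹ := by
  have hG0 : ∀ (a : Fin m) (y : EuclideanSpace ℝ (Fin m)), y ≠ 0 →
      (∑ p : Fin m, ∑ q : Fin m, ∑ s : Fin m,
        2 * (vMN m p q s y * Dv m a p q s y)) = 0 := by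
    intro a y hy
    have hpdN : pd a (fun z => ∑ p : Fin m, ∑ q : Fin m, ∑ s : Fin m,
        (vMN m p q s z)^2) y
        = ∑ p : Fin m, ∑ q : Fin m, ∑ s : Fin m,
            2 * (vMN m p q s y * Dv m a p q s y) := by
      rw [pd_sum _ _ (fun p _ => DifferentiableAt.fun_sum fun q _ => DifferentiableAt.fun_sum
        fun s _ => ((diff_vMN hy p q s).fun_mul (diff_vMN hy p q s)).congr_of_eventuallyEq
          (by filter_upwards with z; ring))]
      refine Finset.sum_congr rfl fun p _ => ?_
      rw [pd_sum _ _ (fun q _ => DifferentiableAt.fun_sum fun s _ =>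
        ((diff_vMN hy p q s).fun_mul (diff_vMN hy p q s)).congr_of_eventuallyEq
          (by filter_upwards with z; ring))]
      refine Finset.sum_congr rfl fun q _ => ?_
      rw [pd_sum _ _ (fun s _ =>
        ((diff_vMN hy p q s).fun_mul (diff_vMN hy p q s)).congr_of_eventuallyEq
          (by filter_upwards with z; ring))]
      refine Finset.sum_congr rfl fun s _ => ?_
      have hsq : (fun z => (vMN m p q s z)^2)
          = fun z => vMN m p q s z * vMN m p q s z := by funext z; ring
      rw [hsq, pd_mul (diff_vMN hy p q s) (diff_vMN hy p q s), pd_vMN hy a p q s]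
      ring
    have hconst : pd a (fun z => ∑ p : Fin m, ∑ q : Fin m, ∑ s : Fin m,
        (vMN m p q s z)^2) y = 0 := by
      have hev : (fun z => ∑ p : Fin m, ∑ q : Fin m, ∑ s : Fin m, (vMN m p q s z)^2)
          =ᶠ[nhds y] (fun _ => (1:ℝ)) := by
        filter_upwards [eventually_ne_nhds hy] with z hz
        exact sq_vMN_sum hm hz
      rw [pd_congr hev a, pd_const]
    rw [← hpdN, hconst]
  have key : ∀ a : Fin m, (∑ p : Fin m, ∑ q : Fin m, ∑ s : Fin m,
      ((Dv m a p q s x)^2 + vMN m p q s x * pd a (Dv m a p q s) x)) = 0 := by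
    intro a
    have hzero : pd a (fun y => ∑ p : Fin m, ∑ q : Fin m, ∑ s : Fin m,
        2 * (vMN m p q s y * Dv m a p q s y)) x = 0 := by
      have hev : (fun y => ∑ p : Fin m, ∑ q : Fin m, ∑ s : Fin m,
          2 * (vMN m p q s y * Dv m a p q s y)) =ᶠ[nhds x] (fun _ => (0:ℝ)) := by
        filter_upwards [eventually_ne_nhds hx] with z hz
        exact hG0 a z hz
      rw [pd_congr hev a, pd_const]
    have hexp : pd a (fun y => ∑ p : Fin m, ∑ q : Fin m, ∑ s : Fin m,
        2 * (vMN m p q s y * Dv m a p q s y)) x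
        = ∑ p : Fin m, ∑ q : Fin m, ∑ s : Fin m,
            2 * ((Dv m a p q s x)^2 + vMN m p q s x * pd a (Dv m a p q s) x) := by
      rw [pd_sum _ _ (fun p _ => DifferentiableAt.fun_sum fun q _ => DifferentiableAt.fun_sum
        fun s _ => ((diff_vMN hx p q s).fun_mul (diff_Dv hx a p q s)).const_mul 2)]
      refine Finset.sum_congr rfl fun p _ => ?_
      rw [pd_sum _ _ (fun q _ => DifferentiableAt.fun_sum fun s _ =>
        ((diff_vMN hx p q s).fun_mul (diff_Dv hx a p q s)).const_mul 2)]
      refine Finset.sum_congr rfl fun q _ => ?_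
      rw [pd_sum _ _ (fun s _ =>
        ((diff_vMN hx p q s).fun_mul (diff_Dv hx a p q s)).const_mul 2)]
      refine Finset.sum_congr rfl fun s _ => ?_
      rw [pd_const_mul ((diff_vMN hx p q s).fun_mul (diff_Dv hx a p q s)),
        pd_mul (diff_vMN hx p q s) (diff_Dv hx a p q s), pd_vMN hx a p q s]
      ring
    have h2 := hexp.symm.trans hzero
    have hfac : ∑ p : Fin m, ∑ q : Fin m, ∑ s : Fin m,
        2 * ((Dv m a p q s x)^2 + vMN m p q s x * pd a (Dv m a p q s) x)
        = 2 * ∑ p : Fin m, ∑ q : Fin m, ∑ s : Fin m,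
            ((Dv m a p q s x)^2 + vMN m p q s x * pd a (Dv m a p q s) x) := by
      simp only [Finset.mul_sum]
    rw [hfac] at h2
    linarith
  have hmain : ∑ a : Fin m, ∑ p : Fin m, ∑ q : Fin m, ∑ s : Fin m,
      (pd a (vMN m p q s) x)^2
      = - ∑ a : Fin m, ∑ p : Fin m, ∑ q : Fin m, ∑ s : Fin m,
          vMN m p q s x * pd a (Dv m a p q s) x := by
    rw [← Finset.sum_neg_distrib]
    refine Finset.sum_congr rfl fun a _ => ?_
    have hsplit := key a
    have e1 : ∑ p : Fin m, ∑ q : Fin m, ∑ s : Fin m, (pd a (vMN m p q s) x)^2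
        = ∑ p : Fin m, ∑ q : Fin m, ∑ s : Fin m, (Dv m a p q s x)^2 := by
      refine Finset.sum_congr rfl fun p _ => Finset.sum_congr rfl fun q _ =>
        Finset.sum_congr rfl fun s _ => ?_
      rw [pd_vMN hx a p q s]
    rw [e1]
    have e2 : ∑ p : Fin m, ∑ q : Fin m, ∑ s : Fin m,
        ((Dv m a p q s x)^2 + vMN m p q s x * pd a (Dv m a p q s) x)
        = (∑ p : Fin m, ∑ q : Fin m, ∑ s : Fin m, (Dv m a p q s x)^2)
          + ∑ p : Fin m, ∑ q : Fin m, ∑ s : Fin m,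
              vMN m p q s x * pd a (Dv m a p q s) x := by
      simp only [Finset.sum_add_distrib]
    rw [e2] at hsplit
    linarith
  rw [hmain, sum_swap4]
  have e3 : ∑ p : Fin m, ∑ q : Fin m, ∑ s : Fin m, ∑ a : Fin m,
      vMN m p q s x * pd a (Dv m a p q s) x
      = ∑ p : Fin m, ∑ q : Fin m, ∑ s : Fin m,
          (-(3*((m:ℝ)+1)) * (‖x‖^2)⁻¹) * (vMN m p q s x * vMN m p q s x) := by
    refine Finset.sum_congr rfl fun p _ => Finset.sum_congr rfl fun q _ =>
      Finset.sum_congr rfl fun s _ => ?_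
    rw [← Finset.mul_sum, ← lapDv hx p q s, lap_vMN hx p q s]
    ring
  rw [e3]
  have e4 : ∑ p : Fin m, ∑ q : Fin m, ∑ s : Fin m,
      (-(3*((m:ℝ)+1)) * (‖x‖^2)⁻¹) * (vMN m p q s x * vMN m p q s x)
      = (-(3*((m:ℝ)+1)) * (‖x‖^2)⁻¹) *
          ∑ p : Fin m, ∑ q : Fin m, ∑ s : Fin m, (vMN m p q s x)^2 := by
    simp only [Finset.mul_sum, sq]
  rw [e4, sq_vMN_sum hm hx]
  ring

theorem stmt15 (m : ℕ) (hm : 2 ≤ m) (x : EuclideanSpace ℝ (Fin m)) (hx : x ≠ 0)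
    (i j k : Fin m) :
    lap (vMN m i j k) x
      + (∑ a : Fin m, ∑ p : Fin m, ∑ q : Fin m, ∑ s : Fin m,
          (pd a (vMN m p q s) x) ^ 2) * vMN m i j k x = 0 := by
  rw [lap_vMN hx i j k, gradSq_vMN hm hx]
  ring
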